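/- Suppose H = ℝⁿ. Let T : H → H be linear and α-averaged with α ∈ (0,1). Then ‖T ∘ P_{(Fix T)^⊥}‖ < 1, where P_{(Fix T)^⊥} is the orthogonal projection onto the orthogonal complement of Fix T. -/

import Mathlib

/-- In `ℝⁿ`, if `T` is linear and `α`-averaged with `α ∈ (0,1)`, then
`‖T ∘ P_{(Fix T)ᗮ}‖ < 1`. -/
theorem opNorm_comp_projPerp_lt_one {n : ℕ}
    (α : ℝ) (hα : α ∈ Set.Ioo (0 : ℝ) 1)
    (T : EuclideanSpace ℝ (Fin n) →L[ℝ] EuclideanSpace ℝ (Fin n))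
    (G : EuclideanSpace ℝ (Fin n) → EuclideanSpace ℝ (Fin n))
    (hG : ∀ x y, ‖G x - G y‖ ≤ ‖x - y‖)
    (hT : ∀ x, T x = (1 - α) • x + α • G x) :
    ‖T ∘L ((LinearMap.ker ((1 - T : EuclideanSpace ℝ (Fin n) →L[ℝ] EuclideanSpace ℝ (Fin n)) :
          EuclideanSpace ℝ (Fin n) →ₗ[ℝ] EuclideanSpace ℝ (Fin n)))ᗮ.subtypeL ∘L
        Submodule.orthogonalProjectionOnto (LinearMap.ker ((1 - T : EuclideanSpace ℝ (Fin n) →L[ℝ] EuclideanSpace ℝ (Fin n)) :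
          EuclideanSpace ℝ (Fin n) →ₗ[ℝ] EuclideanSpace ℝ (Fin n)))ᗮ)‖ < 1 := by
  obtain ⟨hα0, hα1⟩ := hα
  set K := LinearMap.ker ((1 - T : EuclideanSpace ℝ (Fin n) →L[ℝ] EuclideanSpace ℝ (Fin n)) :
          EuclideanSpace ℝ (Fin n) →ₗ[ℝ] EuclideanSpace ℝ (Fin n)) with hK
  set S := T ∘L (Kᗮ.subtypeL ∘L Submodule.orthogonalProjectionOnto Kᗮ) with hSdef
  -- G 0 = 0
  have hG0 : G 0 = 0 := by
    have h := hT 0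
    simp only [smul_zero, map_zero, zero_add] at h
    have : α • G 0 = 0 := h.symm
    have := smul_eq_zero.mp this
    rcases this with h' | h'
    · exact absurd h' (ne_of_gt hα0)
    · exact h'
  have hGle : ∀ x : EuclideanSpace ℝ (Fin n), ‖G x‖ ≤ ‖x‖ := by
    intro x
    have := hG x 0
    simpa [hG0] using this
  -- Key: on Kᗮ, nonzero vectors are strictly contracted
  have key : ∀ x : EuclideanSpace ℝ (Fin n), x ∈ Kᗮ → x ≠ 0 → ‖T x‖ < ‖x‖ := by
    intro x hx hx0
    have hne : x - G x ≠ 0 := by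
      intro h
      have hGx : G x = x := by
        have := sub_eq_zero.mp h; exact this.symm
      have hTx : T x = x := by
        rw [hT x, hGx]
        module
      have hxK : x ∈ K := by
        rw [hK, LinearMap.mem_ker]
        simp [ContinuousLinearMap.sub_apply, hTx]
      have : (inner ℝ x x : ℝ) = 0 := hx x hxK
      exact hx0 (inner_self_eq_zero.mp this)
    have hd : (0:ℝ) < ‖x - G x‖ := norm_pos_iff.mpr hne
    have hd2 : ‖x - G x‖^2 = ‖x‖^2 - 2 * (inner ℝ x (G x) : ℝ) + ‖G x‖^2 := by
      rw [norm_sub_sq_real]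
    have hTx2 : ‖T x‖^2 = (1-α)^2 * ‖x‖^2 + 2 * ((1-α)*α) * (inner ℝ x (G x) : ℝ)
        + α^2 * ‖G x‖^2 := by
      rw [hT x, norm_add_sq_real, real_inner_smul_left, real_inner_smul_right,
        norm_smul, norm_smul]
      rw [Real.norm_eq_abs, Real.norm_eq_abs, abs_of_pos hα0,
        abs_of_pos (by linarith : (0:ℝ) < 1 - α)]
      ring
    have hb : ‖G x‖ ≤ ‖x‖ := hGle x
    have hbpos : (0:ℝ) ≤ ‖G x‖ := norm_nonneg _
    have hx2 : ‖T x‖^2 < ‖x‖^2 := by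
      nlinarith [mul_pos (mul_pos hα0 (by linarith : (0:ℝ) < 1 - α)) (pow_pos hd 2),
        mul_le_mul hb hb hbpos (norm_nonneg x),
        mul_pos hα0 (by linarith : (0:ℝ) < 1 - α)]
    exact lt_of_pow_lt_pow_left₀ 2 (norm_nonneg x) hx2
  -- norm of S x for unit x is < 1
  have hSlt : ∀ x : EuclideanSpace ℝ (Fin n), ‖x‖ = 1 → ‖S x‖ < 1 := by
    intro x hx
    have hSx : S x = T ((Submodule.orthogonalProjectionOnto Kᗮ x : EuclideanSpace ℝ (Fin n))) := rfl
    set p : EuclideanSpace ℝ (Fin n) := (Submodule.orthogonalProjectionOnto Kᗮ x : EuclideanSpace ℝ (Fin n)) with hp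
    have hpmem : p ∈ Kᗮ := (Submodule.orthogonalProjectionOnto Kᗮ x).2
    have hple : ‖p‖ ≤ ‖x‖ := by
      have h1 := ContinuousLinearMap.le_opNorm (Submodule.orthogonalProjectionOnto Kᗮ) x
      have h2 := Submodule.orthogonalProjectionOnto_norm_le Kᗮ
      calc ‖p‖ = ‖Submodule.orthogonalProjectionOnto Kᗮ x‖ := rfl
        _ ≤ ‖Submodule.orthogonalProjectionOnto Kᗮ‖ * ‖x‖ := h1
        _ ≤ 1 * ‖x‖ := by
            apply mul_le_mul_of_nonneg_right h2 (norm_nonneg x)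
        _ = ‖x‖ := one_mul _
    by_cases hp0 : p = 0
    · rw [hSx, hp0]
      simp
    · calc ‖S x‖ = ‖T p‖ := by rw [hSx]
        _ < ‖p‖ := key p hpmem hp0
        _ ≤ ‖x‖ := hple
        _ = 1 := hx
  rcases subsingleton_or_nontrivial (EuclideanSpace ℝ (Fin n)) with hsub | hnt
  · have h0 : S = 0 := Subsingleton.elim _ _
    rw [h0, norm_zero]
    exact one_pos
  · obtain ⟨x₀, hx₀s, hmax⟩ := (isCompact_sphere (0 : EuclideanSpace ℝ (Fin n)) 1).exists_isMaxOn
      (NormedSpace.sphere_nonempty.mpr zero_le_one)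
      ((continuous_norm.comp S.continuous).continuousOn)
    have hx₀ : ‖x₀‖ = 1 := by simpa using mem_sphere_zero_iff_norm.mp hx₀s
    set c := ‖S x₀‖ with hc
    have hc1 : c < 1 := hSlt x₀ hx₀
    have hSle : ‖S‖ ≤ c := by
      apply ContinuousLinearMap.opNorm_le_bound' _ (norm_nonneg _)
      intro x hxne
      have hxn : ‖x‖ ≠ 0 := hxne
      set u := ‖x‖⁻¹ • x with hu
      have hun : ‖u‖ = 1 := by
        rw [hu, norm_smul, Real.norm_eq_abs, abs_inv, abs_of_nonneg (norm_nonneg x),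
          inv_mul_cancel₀ hxn]
      have husphere : u ∈ Metric.sphere (0 : EuclideanSpace ℝ (Fin n)) 1 := by
        simpa [mem_sphere_zero_iff_norm] using hun
      have hle := hmax husphere
      have hxu : x = ‖x‖ • u := by
        rw [hu, smul_smul, mul_inv_cancel₀ hxn, one_smul]
      calc ‖S x‖ = ‖S (‖x‖ • u)‖ := by rw [← hxu]
        _ = ‖x‖ * ‖S u‖ := by
            rw [map_smul, norm_smul, Real.norm_eq_abs, abs_of_nonneg (norm_nonneg x)]
        _ ≤ ‖x‖ * c := by
            exact mul_le_mul_of_nonneg_left hle (norm_nonneg x)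
        _ = c * ‖x‖ := mul_comm _ _
    calc ‖S‖ ≤ c := hSle
      _ < 1 := hc1
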